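/- There exist constants B₀ > 0 and C > 0 such that for every B ≥ B₀, every integer n ≥ 1, and every real K with 1 ≤ K ≤ e^{B n}, the Lebesgue measure of the set { x ∈ [0,1] : x is irrational and v_n(x) ≥ K·e^{B n} } is at most C·e^{−B n/2}/K. -/

import Mathlib

open Filter MeasureTheory
open scoped NNReal ENNReal

/-- `cfDen x n` is the denominator `v_n` of the `n`-th convergent of the
continued fraction expansion of `x` (so `v₀ = 1`, `v₁ = a₁`,
`v_{ℓ+1} = a_{ℓ+1} v_ℓ + v_{ℓ-1}`). -/
noncomputable def cfDen (x : ℝ) (n : ℕ) : ℝ := (GenContFract.of x).dens n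

/-- Gauss map -/
noncomputable def gMap (x : ℝ) : ℝ := Int.fract x⁻¹

/-- digits -/
noncomputable def dig (x : ℝ) (n : ℕ) : ℤ := ⌊(gMap^[n] x)⁻¹⌋

lemma irr_fract {x : ℝ} (hx : Irrational x) : Irrational (Int.fract x) := by
  exact hx.sub_intCast ⌊x⌋

lemma gMap_mem {x : ℝ} (hx : Irrational x) :
    Irrational (gMap x) ∧ gMap x ∈ Set.Ioo (0:ℝ) 1 := by
  have hirr : Irrational (gMap x) := irr_fract hx.inv
  refine ⟨hirr, ⟨lt_of_le_of_ne (Int.fract_nonneg _) (Ne.symm hirr.ne_zero), Int.fract_lt_one _⟩⟩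

lemma iter_mem {x : ℝ} (hx : Irrational x) (h0 : x ∈ Set.Ioo (0:ℝ) 1) (n : ℕ) :
    Irrational (gMap^[n] x) ∧ gMap^[n] x ∈ Set.Ioo (0:ℝ) 1 := by
  induction n with
  | zero => exact ⟨hx, h0⟩
  | succ n ih =>
    rw [Function.iterate_succ_apply']
    exact ⟨(gMap_mem ih.1).1, (gMap_mem ih.1).2⟩

lemma one_le_dig {x : ℝ} (hx : Irrational x) (h0 : x ∈ Set.Ioo (0:ℝ) 1) (n : ℕ) :
    1 ≤ dig x n := by
  have h := (iter_mem hx h0 n).2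
  have : (1:ℝ) ≤ (gMap^[n] x)⁻¹ := (one_le_inv₀ h.1).mpr h.2.le
  exact Int.le_floor.2 (by exact_mod_cast this)

lemma fract_self {x : ℝ} (h0 : x ∈ Set.Ioo (0:ℝ) 1) : Int.fract x = x :=
  Int.fract_eq_self.2 ⟨h0.1.le, h0.2⟩

lemma of_s_shift {x : ℝ} (hx : Irrational x) (h0 : x ∈ Set.Ioo (0:ℝ) 1) (n : ℕ) :
    (GenContFract.of x).s.get? (n+1) = (GenContFract.of (gMap x)).s.get? n := by
  rw [GenContFract.of_s_succ, fract_self h0]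
  have hne : Int.fract x⁻¹ ≠ 0 := (gMap_mem hx).1.ne_zero
  cases n with
  | zero =>
    have h1 : (GenContFract.of x⁻¹).s.head = some ⟨1, (⌊(Int.fract x⁻¹)⁻¹⌋ : ℝ)⟩ :=
      GenContFract.of_s_head hne
    have h2 : (GenContFract.of (gMap x)).s.head
        = some ⟨1, (⌊(Int.fract (gMap x))⁻¹⌋ : ℝ)⟩ :=
      GenContFract.of_s_head (by rw [gMap, Int.fract_fract]; exact hne)
    rw [show Int.fract (gMap x) = Int.fract x⁻¹ by rw [gMap, Int.fract_fract]] at h2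
    exact h1.trans h2.symm
  | succ n =>
    rw [GenContFract.of_s_succ, GenContFract.of_s_succ, gMap, Int.fract_fract]

lemma of_s_eq {x : ℝ} (hx : Irrational x) (h0 : x ∈ Set.Ioo (0:ℝ) 1) (n : ℕ) :
    (GenContFract.of x).s.get? n = some ⟨1, (dig x n : ℝ)⟩ := by
  induction n generalizing x with
  | zero =>
    have hne : Int.fract x ≠ 0 := by rw [fract_self h0]; exact hx.ne_zero
    have h1 := GenContFract.of_s_head hne
    rw [show (⌊(Int.fract x)⁻¹⌋ : ℤ) = dig x 0 by rw [fract_self h0]; rfl] at h1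
    exact h1
  | succ n ih =>
    rw [of_s_shift hx h0, ih (gMap_mem hx).1 (gMap_mem hx).2]
    simp [dig, Function.iterate_succ_apply]
noncomputable def Phi (x : ℝ) (n : ℕ) : ℝ := ∏ i ∈ Finset.range n, ((dig x i : ℝ) + 1)

lemma Phi_pos {x : ℝ} (hx : Irrational x) (h0 : x ∈ Set.Ioo (0:ℝ) 1) (n : ℕ) :
    0 < Phi x n := by
  apply Finset.prod_pos
  intro i _
  have := one_le_dig hx h0 i
  have : (1:ℝ) ≤ (dig x i : ℝ) := by exact_mod_cast this
  linarith

lemma Phi_succ' {x : ℝ} (n : ℕ) :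
    Phi x (n+1) = ((dig x 0 : ℝ) + 1) * Phi (gMap x) n := by
  rw [Phi, Finset.prod_range_succ', Phi, mul_comm]
  congr 1

lemma dens_le_Phi {x : ℝ} (hx : Irrational x) (h0 : x ∈ Set.Ioo (0:ℝ) 1) (n : ℕ) :
    (GenContFract.of x).dens n ≤ Phi x n := by
  induction n with
  | zero => simp [Phi, GenContFract.zeroth_den_eq_one]
  | succ n ih =>
    cases n with
    | zero =>
      rw [GenContFract.first_den_eq (of_s_eq hx h0 0)]
      have h1 : (1:ℝ) ≤ (dig x 0 : ℝ) := by exact_mod_cast one_le_dig hx h0 0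
      simp only [Phi, zero_add, Finset.prod_range_one]
      linarith
    | succ m =>
      have hrec := GenContFract.dens_recurrence (g := GenContFract.of x)
        (of_s_eq hx h0 (m+1)) rfl rfl
      rw [hrec]
      have hmono : (GenContFract.of x).dens m ≤ (GenContFract.of x).dens (m+1) :=
        GenContFract.of_den_mono
      have hd1 : (1:ℝ) ≤ (dig x (m+1) : ℝ) := by exact_mod_cast one_le_dig hx h0 (m+1)
      have hnn : (0:ℝ) ≤ (GenContFract.of x).dens (m+1) := GenContFract.zero_le_of_den
      have step : (dig x (m+1) : ℝ) * (GenContFract.of x).dens (m+1)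
          + 1 * (GenContFract.of x).dens m
          ≤ ((dig x (m+1) : ℝ) + 1) * (GenContFract.of x).dens (m+1) := by nlinarith
      refine step.trans ?_
      rw [Phi, Finset.prod_range_succ]
      rw [Phi] at ih
      have h2 : (0:ℝ) ≤ (dig x (m+1) : ℝ) + 1 := by linarith
      nlinarith [Phi_pos hx h0 (m+1), ih]
lemma vol_image_le {K : ℝ≥0} {f : ℝ → ℝ} {s : Set ℝ} (h : LipschitzOnWith K f s) :
    volume (f '' s) ≤ (K : ℝ≥0∞) * volume s := by
  have := h.hausdorffMeasure_image_le (d := 1) zero_le_one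
  simpa [MeasureTheory.hausdorffMeasure_real, ENNReal.rpow_one] using this

lemma lip_aux (a : ℕ) (s : Set ℝ) (hs : s ⊆ Set.Ioo 0 1) :
    LipschitzOnWith (Real.toNNReal ((((a:ℝ)+1)^2)⁻¹)) (fun y => (((a:ℝ)+1) + y)⁻¹) s := by
  rw [lipschitzOnWith_iff_dist_le_mul]
  intro y hy z hz
  set c : ℝ := (a:ℝ)+1 with hc
  have hc1 : (1:ℝ) ≤ c := by simp [hc]
  have hy0 : 0 < y := (hs hy).1
  have hz0 : 0 < z := (hs hz).1
  have h1 : 0 < c + y := by linarith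
  have h2 : 0 < c + z := by linarith
  rw [Real.dist_eq, Real.dist_eq, Real.coe_toNNReal _ (by positivity)]
  have key : (c+y)⁻¹ - (c+z)⁻¹ = (z - y)/((c+y)*(c+z)) := by
    rw [inv_sub_inv h1.ne' h2.ne']
    congr 1
    ring
  show |(c + y)⁻¹ - (c + z)⁻¹| ≤ ((c^2)⁻¹) * |y - z|
  rw [key, abs_div, abs_of_pos (mul_pos h1 h2)]
  have hcc : c^2 ≤ (c+y)*(c+z) := by nlinarith
  calc |z - y| / ((c+y)*(c+z)) ≤ |z - y| / c^2 :=
        div_le_div_of_nonneg_left (abs_nonneg _) (by positivity) hcc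
    _ = (c^2)⁻¹ * |y - z| := by rw [abs_sub_comm, div_eq_inv_mul]

def ESet (n : ℕ) (T : ℝ) : Set ℝ :=
  {x | x ∈ Set.Ioo (0:ℝ) 1 ∧ Irrational x ∧ T ≤ Phi x n}

lemma ESet_subset (n : ℕ) (T : ℝ) :
    ESet (n+1) T ⊆ ⋃ a : ℕ, (fun y => (((a:ℝ)+1) + y)⁻¹) '' ESet n (T / ((a:ℝ)+2)) := by
  rintro x ⟨h0, hx, hT⟩
  have hb := one_le_dig hx h0 0
  obtain ⟨a, ha⟩ : ∃ a : ℕ, (a:ℤ) + 1 = dig x 0 :=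
    ⟨(dig x 0 - 1).toNat, by omega⟩
  have haR : ((a:ℝ) + 1) = ((dig x 0 : ℤ) : ℝ) := by exact_mod_cast congrArg (Int.cast : ℤ → ℝ) ha
  refine Set.mem_iUnion.2 ⟨a, gMap x, ⟨(gMap_mem hx).2, (gMap_mem hx).1, ?_⟩, ?_⟩
  · have hphi := Phi_succ' (x := x) n
    have hpos : (0:ℝ) < (a:ℝ) + 2 := by positivity
    rw [div_le_iff₀ hpos]
    have : ((a:ℝ)+2) = (dig x 0 : ℝ) + 1 := by rw [← haR]; ring
    rw [this]
    calc T ≤ Phi x (n+1) := hT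
      _ = Phi (gMap x) n * ((dig x 0 : ℝ) + 1) := by rw [hphi]; ring
  · have hx0 : x ≠ 0 := hx.ne_zero
    have : ((a:ℝ)+1) + gMap x = x⁻¹ := by
      rw [haR, gMap, Int.fract]
      have : dig x 0 = ⌊x⁻¹⌋ := rfl
      rw [this]; ring
    simp only [this, inv_inv]

noncomputable def C0 : ℝ := ∑' a : ℕ, ((a:ℝ)+2) ^ (7/8 : ℝ) / ((a:ℝ)+1)^2

lemma hsummable : Summable (fun a : ℕ => ((a:ℝ)+2) ^ (7/8:ℝ) / ((a:ℝ)+1)^2) := by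
  have hg : Summable (fun a : ℕ => (2:ℝ)^(7/8:ℝ) * ((a:ℝ)+1) ^ (-(9/8):ℝ)) := by
    apply Summable.mul_left
    have h1 : Summable (fun n : ℕ => ((n:ℝ)) ^ (-(9/8):ℝ)) :=
      Real.summable_nat_rpow.2 (by norm_num)
    have := (summable_nat_add_iff 1).2 h1
    simpa using this
  apply Summable.of_nonneg_of_le (fun a => by positivity) _ hg
  intro a
  have h1 : ((a:ℝ)+2) ^ (7/8:ℝ) ≤ (2:ℝ)^(7/8:ℝ) * ((a:ℝ)+1) ^ (7/8:ℝ) := by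
    rw [← Real.mul_rpow (by norm_num) (by positivity)]
    apply Real.rpow_le_rpow (by positivity) (by linarith) (by norm_num)
  have h2 : ((a:ℝ)+1) ^ (7/8:ℝ) / ((a:ℝ)+1)^2 = ((a:ℝ)+1) ^ (-(9/8):ℝ) := by
    have hb : (0:ℝ) < (a:ℝ)+1 := by positivity
    rw [← Real.rpow_natCast ((a:ℝ)+1) 2, ← Real.rpow_sub hb]
    norm_num
  calc ((a:ℝ)+2) ^ (7/8:ℝ) / ((a:ℝ)+1)^2
      ≤ ((2:ℝ)^(7/8:ℝ) * ((a:ℝ)+1) ^ (7/8:ℝ)) / ((a:ℝ)+1)^2 := by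
        exact (div_le_div_iff_of_pos_right (by positivity)).mpr h1
    _ = (2:ℝ)^(7/8:ℝ) * (((a:ℝ)+1) ^ (7/8:ℝ) / ((a:ℝ)+1)^2) := by ring
    _ = (2:ℝ)^(7/8:ℝ) * ((a:ℝ)+1) ^ (-(9/8):ℝ) := by rw [h2]

lemma C0_pos : 0 < C0 := by
  apply Summable.tsum_pos hsummable (fun i => by positivity) 0
  positivity
lemma ESet_subset_Ioo (n : ℕ) (T : ℝ) : ESet n T ⊆ Set.Ioo (0:ℝ) 1 := fun _ hx => hx.1

lemma vol_ESet : ∀ n : ℕ, ∀ T : ℝ, 0 < T →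
    volume (ESet n T) ≤ ENNReal.ofReal (C0 ^ n * T ^ (-(7/8):ℝ)) := by
  intro n
  induction n with
  | zero =>
    intro T hT
    by_cases hT1 : T ≤ 1
    · calc volume (ESet 0 T) ≤ volume (Set.Ioo (0:ℝ) 1) := measure_mono (ESet_subset_Ioo 0 T)
        _ = ENNReal.ofReal 1 := by simp [Real.volume_Ioo]
        _ ≤ _ := by
            apply ENNReal.ofReal_le_ofReal
            rw [pow_zero, one_mul, Real.rpow_neg hT.le]
            have h1 : T ^ (7/8:ℝ) ≤ 1 := Real.rpow_le_one hT.le hT1 (by norm_num)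
            exact (one_le_inv₀ (Real.rpow_pos_of_pos hT _)).mpr h1
    · have hE : ESet 0 T = ∅ := by
        ext x
        simp only [ESet, Set.mem_setOf_eq, Set.mem_empty_iff_false, iff_false, not_and]
        intro _ _
        simp only [Phi, Finset.range_zero, Finset.prod_empty]
        linarith
      simp [hE]
  | succ n ih =>
    intro T hT
    have key : ∀ a : ℕ,
        volume ((fun y => (((a:ℝ)+1) + y)⁻¹) '' ESet n (T / ((a:ℝ)+2)))
          ≤ ENNReal.ofReal (C0 ^ n * T ^ (-(7/8):ℝ) * (((a:ℝ)+2)^(7/8:ℝ) / ((a:ℝ)+1)^2)) := by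
      intro a
      have hpos2 : (0:ℝ) < (a:ℝ)+2 := by positivity
      have hT' : 0 < T / ((a:ℝ)+2) := by positivity
      have hlip := vol_image_le (lip_aux a _ (ESet_subset_Ioo n (T / ((a:ℝ)+2))))
      have hco : ((Real.toNNReal ((((a:ℝ)+1)^2)⁻¹) : ℝ≥0) : ℝ≥0∞)
          = ENNReal.ofReal ((((a:ℝ)+1)^2)⁻¹) := rfl
      calc volume ((fun y => (((a:ℝ)+1) + y)⁻¹) '' ESet n (T / ((a:ℝ)+2)))
          ≤ ENNReal.ofReal ((((a:ℝ)+1)^2)⁻¹) * volume (ESet n (T / ((a:ℝ)+2))) := by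
            rw [← hco]; exact hlip
        _ ≤ ENNReal.ofReal ((((a:ℝ)+1)^2)⁻¹)
              * ENNReal.ofReal (C0 ^ n * (T / ((a:ℝ)+2)) ^ (-(7/8):ℝ)) := by
            exact mul_le_mul_right (ih _ hT') _
        _ = ENNReal.ofReal ((((a:ℝ)+1)^2)⁻¹ * (C0 ^ n * (T / ((a:ℝ)+2)) ^ (-(7/8):ℝ))) := by
            rw [← ENNReal.ofReal_mul (by positivity)]
        _ = ENNReal.ofReal (C0 ^ n * T ^ (-(7/8):ℝ) * (((a:ℝ)+2)^(7/8:ℝ) / ((a:ℝ)+1)^2)) := by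
            congr 1
            rw [Real.div_rpow hT.le hpos2.le, Real.rpow_neg hpos2.le, div_eq_mul_inv, inv_inv]
            ring
    have hsum : Summable (fun a : ℕ =>
        C0 ^ n * T ^ (-(7/8):ℝ) * (((a:ℝ)+2)^(7/8:ℝ) / ((a:ℝ)+1)^2)) :=
      hsummable.mul_left _
    calc volume (ESet (n+1) T)
        ≤ volume (⋃ a : ℕ, (fun y => (((a:ℝ)+1) + y)⁻¹) '' ESet n (T / ((a:ℝ)+2))) :=
          measure_mono (ESet_subset n T)
      _ ≤ ∑' a : ℕ, volume ((fun y => (((a:ℝ)+1) + y)⁻¹) '' ESet n (T / ((a:ℝ)+2))) :=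
          measure_iUnion_le _
      _ ≤ ∑' a : ℕ, ENNReal.ofReal
            (C0 ^ n * T ^ (-(7/8):ℝ) * (((a:ℝ)+2)^(7/8:ℝ) / ((a:ℝ)+1)^2)) :=
          ENNReal.tsum_le_tsum key
      _ = ENNReal.ofReal (∑' a : ℕ,
            C0 ^ n * T ^ (-(7/8):ℝ) * (((a:ℝ)+2)^(7/8:ℝ) / ((a:ℝ)+1)^2)) :=
          (ENNReal.ofReal_tsum_of_nonneg (fun a => mul_nonneg (mul_nonneg
            (pow_nonneg C0_pos.le n) (Real.rpow_nonneg hT.le _)) (by positivity)) hsum).symm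
      _ = ENNReal.ofReal (C0 ^ (n+1) * T ^ (-(7/8):ℝ)) := by
          rw [tsum_mul_left]
          congr 1
          rw [← C0]
          ring
theorem measure_large_cfDen_single :
    ∃ B₀ > (0 : ℝ), ∃ C > (0 : ℝ), ∀ B : ℝ, B₀ ≤ B → ∀ n : ℕ, 1 ≤ n →
      ∀ K : ℝ, 1 ≤ K → K ≤ Real.exp (B * n) →
        volume {x : ℝ | x ∈ Set.Icc (0 : ℝ) 1 ∧ Irrational x ∧
            cfDen x n ≥ K * Real.exp (B * n)}
          ≤ ENNReal.ofReal (C * Real.exp (-B * n / 2) / K) := by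
  refine ⟨max 1 (4 * Real.log C0), lt_of_lt_of_le one_pos (le_max_left _ _), 1, one_pos, ?_⟩
  intro B hB n _ K hK1 hK2
  have hKpos : (0:ℝ) < K := lt_of_lt_of_le one_pos hK1
  set T : ℝ := K * Real.exp (B * n) with hTdef
  have hT : 0 < T := by positivity
  have hsub : {x : ℝ | x ∈ Set.Icc (0:ℝ) 1 ∧ Irrational x ∧ cfDen x n ≥ T} ⊆ ESet n T := by
    rintro x ⟨hicc, hx, hv⟩
    have hne1 : x ≠ 1 := fun h => (hx.ne_int 1) (by rw [h]; norm_num)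
    have h0 : x ∈ Set.Ioo (0:ℝ) 1 :=
      ⟨lt_of_le_of_ne hicc.1 (Ne.symm hx.ne_zero), lt_of_le_of_ne hicc.2 hne1⟩
    exact ⟨h0, hx, le_trans hv (dens_le_Phi hx h0 n)⟩
  refine le_trans (le_trans (measure_mono hsub) (vol_ESet n T hT)) (ENNReal.ofReal_le_ofReal ?_)
  -- real inequality
  have hB4 : Real.log C0 ≤ B / 4 := by
    have := le_trans (le_max_right (1:ℝ) (4 * Real.log C0)) hB
    linarith
  have hC0B : C0 ≤ Real.exp (B / 4) := (Real.log_le_iff_le_exp C0_pos).mp hB4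
  have hCn : C0 ^ n ≤ Real.exp (B * n / 4) := by
    calc C0 ^ n ≤ (Real.exp (B / 4)) ^ n := pow_le_pow_left₀ C0_pos.le hC0B n
      _ = Real.exp (B * n / 4) := by
          rw [← Real.exp_nat_mul]; congr 1; push_cast; ring
  have e1 : T ^ (-(7/8):ℝ) = K ^ (-(7/8):ℝ) * Real.exp ((B * n) * (-(7/8))) := by
    rw [hTdef, Real.mul_rpow hKpos.le (Real.exp_nonneg _), ← Real.exp_mul]
  have e2 : K ^ (-(7/8):ℝ) ≤ K⁻¹ * Real.exp ((B * n) * (1/8)) := by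
    have : K ^ (-(7/8):ℝ) = K ^ (-1:ℝ) * K ^ ((1/8):ℝ) := by
      rw [← Real.rpow_add hKpos]; norm_num
    rw [this, Real.rpow_neg_one]
    apply mul_le_mul_of_nonneg_left _ (inv_nonneg.2 hKpos.le)
    calc K ^ ((1/8):ℝ) ≤ (Real.exp (B * n)) ^ ((1/8):ℝ) :=
          Real.rpow_le_rpow hKpos.le hK2 (by norm_num)
      _ = Real.exp ((B * n) * (1/8)) := (Real.exp_mul _ _).symm
  have hTnn : 0 ≤ T ^ (-(7/8):ℝ) := Real.rpow_nonneg hT.le _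
  calc C0 ^ n * T ^ (-(7/8):ℝ)
      ≤ Real.exp (B * n / 4) * (K⁻¹ * Real.exp ((B * n) * (1/8))
          * Real.exp ((B * n) * (-(7/8)))) := by
        rw [e1]
        have h3 : K ^ (-(7/8):ℝ) * Real.exp ((B * n) * (-(7/8)))
            ≤ K⁻¹ * Real.exp ((B * n) * (1/8)) * Real.exp ((B * n) * (-(7/8))) :=
          mul_le_mul_of_nonneg_right e2 (Real.exp_nonneg _)
        have h4 : 0 ≤ K ^ (-(7/8):ℝ) * Real.exp ((B * n) * (-(7/8))) :=
          mul_nonneg (Real.rpow_nonneg hKpos.le _) (Real.exp_nonneg _)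
        calc C0 ^ n * (K ^ (-(7/8):ℝ) * Real.exp ((B * n) * (-(7/8))))
            ≤ Real.exp (B * n / 4) * (K ^ (-(7/8):ℝ) * Real.exp ((B * n) * (-(7/8)))) :=
              mul_le_mul_of_nonneg_right hCn h4
          _ ≤ Real.exp (B * n / 4) * (K⁻¹ * Real.exp ((B * n) * (1/8))
                * Real.exp ((B * n) * (-(7/8)))) :=
              mul_le_mul_of_nonneg_left h3 (Real.exp_nonneg _)
    _ = Real.exp (B * n / 4 + (B * n * (1/8) + B * n * (-(7/8)))) * K⁻¹ := by
        rw [Real.exp_add, Real.exp_add]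
        ring
    _ = Real.exp (-B * n / 2) * K⁻¹ := by
        rw [show B * (n:ℝ) / 4 + (B * n * (1/8) + B * n * (-(7/8))) = -B * n / 2 by ring]
    _ = 1 * Real.exp (-B * n / 2) / K := by
        rw [one_mul, div_eq_mul_inv _ K]
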